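/- Let p_1 ≥ ⋯ ≥ p_m > 0, let {Π_i}_{i=1}^m be a POVM on ℂ^n with n ≤ m, and let ρ_i be density matrices. Then the probability of correct detection Σ_{i=1}^m p_i Tr(Π_i ρ_i) ≤ Σ_{i=1}^n p_i. -/

import Mathlib

open Matrix ComplexOrder

lemma psd_trace_nonneg' {n : ℕ} {M : Matrix (Fin n) (Fin n) ℂ} (hM : M.PosSemidef) :
    0 ≤ M.trace := by
  rw [Matrix.trace]
  apply Finset.sum_nonneg
  intro i _
  exact hM.diag_nonneg

lemma psd_sum {n m : ℕ} (s : Finset (Fin m)) (A : Fin m → Matrix (Fin n) (Fin n) ℂ)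
    (hA : ∀ i, (A i).PosSemidef) : (∑ i ∈ s, A i).PosSemidef := by
  classical
  induction s using Finset.induction with
  | empty => simpa using Matrix.PosSemidef.zero
  | insert _ _ h ih =>
    rw [Finset.sum_insert h]
    exact (hA _).add ih

lemma trace_mul_psd_nonneg {n : ℕ} {A B : Matrix (Fin n) (Fin n) ℂ}
    (hA : A.PosSemidef) (hB : B.PosSemidef) : 0 ≤ (A * B).trace := by
  open scoped MatrixOrder Matrix.Norms.L2Operator in
  obtain ⟨C, rfl⟩ := CStarAlgebra.nonneg_iff_eq_star_mul_self.mp hA.nonneg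
  rw [Matrix.mul_assoc, Matrix.trace_mul_comm]
  exact psd_trace_nonneg' (hB.mul_mul_conjTranspose_same C)

lemma one_sub_psd {n : ℕ} {ρ : Matrix (Fin n) (Fin n) ℂ} (hρ : ρ.PosSemidef)
    (htr : ρ.trace = 1) : ((1 : Matrix (Fin n) (Fin n) ℂ) - ρ).PosSemidef := by
  have hH := hρ.1
  have hspec := hH.spectral_theorem
  set U : Matrix (Fin n) (Fin n) ℂ := (hH.eigenvectorUnitary : Matrix (Fin n) (Fin n) ℂ) with hU
  have hUU : U * star U = 1 := (Matrix.mem_unitaryGroup_iff).mp hH.eigenvectorUnitary.2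
  have hsum : ∑ i, hH.eigenvalues i = 1 := by
    have : ρ.trace = ∑ i, (hH.eigenvalues i : ℂ) := by
      conv_lhs => rw [hspec, Unitary.conjStarAlgAut_apply]
      rw [Matrix.trace_mul_cycle]
      rw [(Matrix.mem_unitaryGroup_iff').mp hH.eigenvectorUnitary.2, Matrix.one_mul,
        Matrix.trace_diagonal]
      simp [Function.comp]
    rw [htr] at this
    have := congrArg Complex.re this.symm
    simpa using this
  have hle : ∀ i, hH.eigenvalues i ≤ 1 := by
    intro i
    rw [← hsum]
    exact Finset.single_le_sum (fun j _ => hρ.eigenvalues_nonneg j) (Finset.mem_univ i)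
  have hdiag : ((1 : Matrix (Fin n) (Fin n) ℂ) - ρ)
      = U * Matrix.diagonal (fun i => (1 - hH.eigenvalues i : ℝ) • (1:ℂ)) * star U := by
    have h1 : (1 : Matrix (Fin n) (Fin n) ℂ) = U * 1 * star U := by
      rw [Matrix.mul_one, hUU]
    have : Matrix.diagonal (fun i => (1 - hH.eigenvalues i : ℝ) • (1:ℂ))
        = 1 - Matrix.diagonal (RCLike.ofReal ∘ hH.eigenvalues) := by
      rw [← Matrix.diagonal_one, Matrix.diagonal_sub]
      funext i
      simp [Complex.ofReal_sub]
    rw [this, Matrix.mul_sub, Matrix.sub_mul, ← h1]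
    congr 1
  rw [hdiag]
  apply Matrix.PosSemidef.mul_mul_conjTranspose_same
  apply Matrix.PosSemidef.diagonal
  intro i
  have : (0:ℝ) ≤ 1 - hH.eigenvalues i := by linarith [hle i]
  simpa [Complex.zero_le_real] using (Complex.zero_le_real).mpr this

lemma card_filter_lt {n m : ℕ} (hnm : n ≤ m) :
    (Finset.univ.filter (fun i : Fin m => (i : ℕ) < n)).card = n := by
  have : Finset.univ.filter (fun i : Fin m => (i : ℕ) < n)
      = Finset.map (Fin.castLEEmb hnm) Finset.univ := by
    ext i
    simp only [Finset.mem_filter, Finset.mem_univ, true_and, Finset.mem_map,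
      Fin.castLEEmb_apply]
    constructor
    · intro h; exact ⟨⟨i, h⟩, rfl⟩
    · rintro ⟨j, rfl⟩; exact j.2
  rw [this, Finset.card_map, Finset.card_univ, Fintype.card_fin]

lemma key_sum {n m : ℕ} (hnm : n ≤ m) (hn : 0 < n) (p t : Fin m → ℝ)
    (hp_pos : ∀ i, 0 < p i)
    (hp_mono : ∀ i j : Fin m, i ≤ j → p j ≤ p i)
    (ht0 : ∀ i, 0 ≤ t i) (ht1 : ∀ i, t i ≤ 1)
    (hts : ∑ i, t i ≤ (n : ℝ)) :
    ∑ i, p i * t i ≤ ∑ i ∈ Finset.univ.filter (fun i : Fin m => (i : ℕ) < n), p i := by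
  classical
  set S := Finset.univ.filter (fun i : Fin m => (i : ℕ) < n) with hS
  have hnm' : n - 1 < m := by omega
  set c : ℝ := p ⟨n - 1, hnm'⟩ with hc
  have hc0 : 0 ≤ c := (hp_pos _).le
  have hcS : ∀ i ∈ S, c ≤ p i := by
    intro i hi
    simp only [hS, Finset.mem_filter] at hi
    exact hp_mono i ⟨n - 1, hnm'⟩ (Fin.le_def.mpr (by simp; omega))
  have hcSc : ∀ i ∈ Sᶜ, p i ≤ c := by
    intro i hi
    simp only [hS, Finset.mem_compl, Finset.mem_filter, Finset.mem_univ, true_and,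
      not_lt] at hi
    exact hp_mono ⟨n - 1, hnm'⟩ i (Fin.le_def.mpr (by simp; omega))
  have hsplit : ∑ i, p i * t i = ∑ i ∈ S, p i * t i + ∑ i ∈ Sᶜ, p i * t i :=
    (Finset.sum_add_sum_compl S _).symm
  have h1 : ∑ i ∈ S, p i * t i ≤ ∑ i ∈ S, p i + c * (∑ i ∈ S, t i - S.card) := by
    have : ∀ i ∈ S, p i * t i ≤ p i + c * (t i - 1) := by
      intro i hi
      have h := hcS i hi
      nlinarith [ht0 i, ht1 i, hp_pos i]
    calc ∑ i ∈ S, p i * t i ≤ ∑ i ∈ S, (p i + c * (t i - 1)) := Finset.sum_le_sum this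
      _ = ∑ i ∈ S, p i + c * (∑ i ∈ S, t i - S.card) := by
          rw [Finset.sum_add_distrib, ← Finset.mul_sum, Finset.sum_sub_distrib,
            Finset.sum_const, nsmul_eq_mul]
          ring
  have h2 : ∑ i ∈ Sᶜ, p i * t i ≤ c * ∑ i ∈ Sᶜ, t i := by
    rw [Finset.mul_sum]
    apply Finset.sum_le_sum
    intro i hi
    exact mul_le_mul_of_nonneg_right (hcSc i hi) (ht0 i)
  have hcard : (S.card : ℝ) = n := by rw [hS, card_filter_lt hnm]
  have htot : ∑ i ∈ S, t i + ∑ i ∈ Sᶜ, t i = ∑ i, t i :=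
    Finset.sum_add_sum_compl S _
  nlinarith [hsplit, h1, h2, hcard, htot, hts, mul_nonneg hc0 (sub_nonneg.mpr hts)]

/-- For non-increasing positive priors, any POVM and any density matrices on ℂ^n
with `n ≤ m`, the probability of correct detection is at most `Σ_{i<n} p i`. -/
theorem correct_detection_le_pseudo_classical {n m : ℕ} (hnm : n ≤ m)
    (p : Fin m → ℝ) (hp_pos : ∀ i, 0 < p i)
    (hp_mono : ∀ i j : Fin m, i ≤ j → p j ≤ p i)
    (Pi : Fin m → Matrix (Fin n) (Fin n) ℂ) (hPi : ∀ i, (Pi i).PosSemidef)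
    (hPisum : ∑ i, Pi i = 1)
    (ρ : Fin m → Matrix (Fin n) (Fin n) ℂ) (hρ : ∀ i, (ρ i).PosSemidef)
    (hρtr : ∀ i, (ρ i).trace = 1) :
    ∑ i, (p i : ℂ) * (Pi i * ρ i).trace ≤
      ((∑ i ∈ Finset.univ.filter (fun i : Fin m => (i : ℕ) < n), p i : ℝ) : ℂ) := by
  classical
  rcases Nat.eq_zero_or_pos m with hm | hm
  · subst hm
    simp [Finset.sum_of_isEmpty]
  rcases Nat.eq_zero_or_pos n with hn | hn
  · exfalso
    have := hρtr ⟨0, hm⟩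
    subst hn
    simp [Matrix.trace] at this
  -- real values of the traces
  set t : Fin m → ℝ := fun i => ((Pi i * ρ i).trace).re with ht
  have h0 : ∀ i, 0 ≤ (Pi i * ρ i).trace := fun i =>
    trace_mul_psd_nonneg (hPi i) (hρ i)
  have him : ∀ i, ((Pi i * ρ i).trace).im = 0 := by
    intro i
    have := (Complex.le_def.mp (h0 i)).2
    simpa using this.symm
  have hteq : ∀ i, (Pi i * ρ i).trace = ((t i : ℝ) : ℂ) := by
    intro i
    apply Complex.ext
    · simp [ht]
    · simp [ht, him i]
  have ht0 : ∀ i, 0 ≤ t i := fun i => (Complex.le_def.mp (h0 i)).1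
  -- 1 - Pi i is PSD
  have hPile : ∀ i, ((1 : Matrix (Fin n) (Fin n) ℂ) - Pi i).PosSemidef := by
    intro i
    have : (1 : Matrix (Fin n) (Fin n) ℂ) - Pi i = ∑ j ∈ Finset.univ.erase i, Pi j := by
      rw [← hPisum, ← Finset.add_sum_erase _ _ (Finset.mem_univ i)]
      abel
    rw [this]
    exact psd_sum _ _ hPi
  have ht1 : ∀ i, t i ≤ 1 := by
    intro i
    have h := trace_mul_psd_nonneg (hPile i) (hρ i)
    rw [Matrix.sub_mul, Matrix.one_mul] at h
    have := (Complex.le_def.mp h).1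
    simpa [Matrix.trace_sub, hρtr i, ht] using this
  -- sum of traces ≤ n
  have hts : ∑ i, t i ≤ (n : ℝ) := by
    have hstep : ∀ i, t i ≤ ((Pi i).trace).re := by
      intro i
      have h := trace_mul_psd_nonneg (hPi i) (one_sub_psd (hρ i) (hρtr i))
      rw [Matrix.mul_sub, Matrix.mul_one] at h
      have := (Complex.le_def.mp h).1
      simpa [Matrix.trace_sub, ht] using this
    calc ∑ i, t i ≤ ∑ i, ((Pi i).trace).re := Finset.sum_le_sum fun i _ => hstep i
      _ = ((∑ i, (Pi i).trace)).re := by rw [Complex.re_sum]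
      _ = ((∑ i, Pi i).trace).re := by rw [Matrix.trace_sum]
      _ = (n : ℝ) := by rw [hPisum]; simp
  have key := key_sum hnm hn p t hp_pos hp_mono ht0 ht1 hts
  calc ∑ i, (p i : ℂ) * (Pi i * ρ i).trace
      = ((∑ i, p i * t i : ℝ) : ℂ) := by
        push_cast
        exact Finset.sum_congr rfl fun i _ => by rw [hteq i]
    _ ≤ ((∑ i ∈ Finset.univ.filter (fun i : Fin m => (i : ℕ) < n), p i : ℝ) : ℂ) :=
        Complex.real_le_real.mpr key
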